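/- Let Q be a complete sequence, let 1 ≤ i < N, and let Q* be the complete sequence obtained from Q by swapping the queries at positions i and i+1. Then D_Q(i) + D_Q(i+1) = D_{Q*}(i) + D_{Q*}(i+1). -/

import Mathlib

/-- The set of scenes: subsets of `Fin n` with at least `k` elements. -/
def scenes (n k : ℕ) : Finset (Finset (Fin n)) :=
  Finset.univ.filter fun s => k ≤ s.card

/-- A complete sequence: a list of queries containing every `k`-element
subset of `Fin n` exactly once. -/
def CompleteSeq (n k : ℕ) (Q : List (Finset (Fin n))) : Prop :=
  Q.Nodup ∧ ∀ q : Finset (Fin n), q ∈ Q ↔ q.card = k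

/-- `tau n Q s` is the least (1-based) index `i` such that `q_i ⊆ s`. -/
def tau (n : ℕ) (Q : List (Finset (Fin n))) (s : Finset (Fin n)) : ℕ :=
  Q.findIdx (fun q => decide (q ⊆ s)) + 1

/-- The expected time to discovery `T(Q) = (1/|S|) Σ_{s∈S} τ(Q,s)`. -/
def T (n k : ℕ) (Q : List (Finset (Fin n))) : ℚ :=
  ((scenes n k).card : ℚ)⁻¹ * ∑ s ∈ scenes n k, (tau n Q s : ℚ)

/-- `D n k Q i`: the number of scenes discovered by the query at (1-based)
position `i` of `Q` but not by any earlier query. -/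
def D (n k : ℕ) (Q : List (Finset (Fin n))) (i : ℕ) : ℕ :=
  ((scenes n k).filter fun s =>
    Q.getD (i - 1) ∅ ⊆ s ∧ ∀ j < i - 1, ¬ Q.getD j ∅ ⊆ s).card

/-- The list obtained from `Q` by swapping the queries at (1-based)
positions `i` and `i+1`. -/
def swapAdj (n : ℕ) (Q : List (Finset (Fin n))) (i : ℕ) : List (Finset (Fin n)) :=
  (Q.set (i - 1) (Q.getD i ∅)).set i (Q.getD (i - 1) ∅)

/-- Swapping adjacent queries preserves the total number of scenes they
discover: `D_Q(i) + D_Q(i+1) = D_{Q*}(i) + D_{Q*}(i+1)`. -/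
theorem D_add_D_swap (n k : ℕ) (hk1 : 1 ≤ k) (hkn : k ≤ n)
    (Q : List (Finset (Fin n))) (hQ : CompleteSeq n k Q)
    (i : ℕ) (hi1 : 1 ≤ i) (hiN : i < Nat.choose n k) :
    D n k Q i + D n k Q (i + 1)
      = D n k (swapAdj n Q i) i + D n k (swapAdj n Q i) (i + 1) := by
  classical
  obtain ⟨hnd, hmem⟩ := hQ
  have hlen : Q.length = Nat.choose n k := by
    have h1 : Q.toFinset = Finset.univ.powersetCard k := by
      ext q
      simp [List.mem_toFinset, hmem, Finset.mem_powersetCard]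
    have h2 := List.toFinset_card_of_nodup hnd
    rw [h1, Finset.card_powersetCard, Finset.card_univ, Fintype.card_fin] at h2
    omega
  have hi' : i < Q.length := by omega
  have hi'' : i - 1 < Q.length := by omega
  set a := Q.getD (i - 1) ∅ with ha
  set b := Q.getD i ∅ with hb
  set Q' := swapAdj n Q i with hQ'
  have hg1 : Q'.getD (i - 1) ∅ = b := by
    simp only [hQ', swapAdj, List.getD_eq_getElem?_getD]
    rw [List.getElem?_set_ne (by omega), List.getElem?_set_self hi'']
    simp [hb, List.getD_eq_getElem?_getD]
  have hg2 : Q'.getD i ∅ = a := by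
    simp only [hQ', swapAdj, List.getD_eq_getElem?_getD]
    rw [List.getElem?_set_self (by simpa using hi')]
    simp [ha, List.getD_eq_getElem?_getD]
  have hg3 : ∀ j, j < i - 1 → Q'.getD j ∅ = Q.getD j ∅ := by
    intro j hj
    simp only [hQ', swapAdj, List.getD_eq_getElem?_getD]
    rw [List.getElem?_set_ne (by omega), List.getElem?_set_ne (by omega)]
  unfold D
  rw [Finset.card_filter, Finset.card_filter, Finset.card_filter, Finset.card_filter,
    ← Finset.sum_add_distrib, ← Finset.sum_add_distrib]
  apply Finset.sum_congr rfl
  intro s _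
  simp only [Nat.add_sub_cancel]
  have hC2 : (∀ j < i, ¬ Q.getD j ∅ ⊆ s) ↔ (¬ a ⊆ s ∧ ∀ j < i - 1, ¬ Q.getD j ∅ ⊆ s) := by
    constructor
    · intro h
      exact ⟨h (i - 1) (by omega), fun j hj => h j (by omega)⟩
    · rintro ⟨h1, h2⟩ j hj
      rcases Nat.lt_or_ge j (i - 1) with h | h
      · exact h2 j h
      · have : j = i - 1 := by omega
        rw [this]; exact h1
  have hC3 : (∀ j < i - 1, ¬ Q'.getD j ∅ ⊆ s) ↔ (∀ j < i - 1, ¬ Q.getD j ∅ ⊆ s) := by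
    constructor <;> intro h j hj
    · rw [← hg3 j hj]; exact h j hj
    · rw [hg3 j hj]; exact h j hj
  have hC4 : (∀ j < i, ¬ Q'.getD j ∅ ⊆ s) ↔ (¬ b ⊆ s ∧ ∀ j < i - 1, ¬ Q.getD j ∅ ⊆ s) := by
    constructor
    · intro h
      refine ⟨by rw [← hg1]; exact h (i - 1) (by omega), fun j hj => ?_⟩
      rw [← hg3 j hj]; exact h j (by omega)
    · rintro ⟨h1, h2⟩ j hj
      rcases Nat.lt_or_ge j (i - 1) with h | h
      · rw [hg3 j h]; exact h2 j h
      · have : j = i - 1 := by omega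
        rw [this, hg1]; exact h1
  simp only [← ha, ← hb, hg1, hg2, hC2, hC3, hC4]
  by_cases hA : a ⊆ s <;> by_cases hB : b ⊆ s <;>
    by_cases hC : ∀ j < i - 1, ¬ Q.getD j ∅ ⊆ s <;> simp [hA, hB, hC]
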